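/- Let n ≥ 1 and N ∈ ℕ. Suppose A₁,…,A_N ∈ ℚ[S,T] are polynomials such that each specialization A_j(0,T) ∈ ℚ[T] is a constant polynomial, and suppose there exist polynomials Q₀,…,Q_{2ⁿ−1} ∈ ℚ[Z₁,…,Z_N] with Q_l(A₁,…,A_N) = c_l in ℚ[S,T] for every 0 ≤ l < 2ⁿ. Then N ≥ 2ⁿ. -/

import Mathlib

open MvPolynomial

/-- The index set of pairs `(p,q)` with `0 ≤ p,q < 2^n` and `p + q = 2^n - 1`. -/
def pairs (n : ℕ) : Finset (ℕ × ℕ) :=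
  (Finset.range (2 ^ n) ×ˢ Finset.range (2 ^ n)).filter
    (fun pq => pq.1 + pq.2 = 2 ^ n - 1)

/-- `c l := 1 + S·∑_{(p,q) ∈ pairs n} T^p·l^q ∈ ℚ[S,T]`, with `S = X 0`, `T = X 1`. -/
noncomputable def c (n l : ℕ) : MvPolynomial (Fin 2) ℚ :=
  1 + X 0 * ∑ pq ∈ pairs n, X 1 ^ pq.1 * C ((l : ℚ) ^ pq.2)

noncomputable def phi0 : MvPolynomial (Fin 2) ℚ →ₐ[ℚ] Polynomial ℚ :=
  aeval ![0, Polynomial.X]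

noncomputable def Dlin : MvPolynomial (Fin 2) ℚ →ₗ[ℚ] Polynomial ℚ :=
  phi0.toLinearMap ∘ₗ (pderiv 0 : Derivation ℚ (MvPolynomial (Fin 2) ℚ) _).toLinearMap

lemma Dlin_apply (f : MvPolynomial (Fin 2) ℚ) : Dlin f = phi0 (pderiv 0 f) := rfl

lemma Dlin_mul (f g : MvPolynomial (Fin 2) ℚ) :
    Dlin (f * g) = phi0 f * Dlin g + phi0 g * Dlin f := by
  simp [Dlin_apply, pderiv_mul, mul_comm]

lemma pairs_eq (n : ℕ) :
    pairs n = (Finset.range (2 ^ n)).image (fun p => (p, 2 ^ n - 1 - p)) := by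
  have h1 : 1 ≤ 2 ^ n := Nat.one_le_two_pow
  ext pq
  simp only [pairs, Finset.mem_filter, Finset.mem_product, Finset.mem_range,
    Finset.mem_image, Prod.ext_iff]
  constructor
  · rintro ⟨⟨hp, hq⟩, h⟩
    exact ⟨pq.1, hp, rfl, by omega⟩
  · rintro ⟨p, hp, h1, h2⟩
    omega

lemma Dlin_c (n l : ℕ) :
    Dlin (c n l) = ∑ p ∈ Finset.range (2 ^ n),
      Polynomial.C ((l : ℚ) ^ (2 ^ n - 1 - p)) * Polynomial.X ^ p := by
  have hP : (pderiv (R := ℚ) 0) (∑ pq ∈ pairs n, X 1 ^ pq.1 * C ((l : ℚ) ^ pq.2)) = 0 := by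
    simp [pderiv_mul, pderiv_pow, pderiv_X_of_ne (show (1 : Fin 2) ≠ 0 by decide)]
  have hd : (pderiv (R := ℚ) 0) (c n l) = ∑ pq ∈ pairs n, X 1 ^ pq.1 * C ((l : ℚ) ^ pq.2) := by
    simp [c, Derivation.leibniz, pderiv_X_self, hP]
  rw [Dlin_apply, hd]
  rw [pairs_eq, Finset.sum_image (by intro a _ b _ h; exact (Prod.ext_iff.mp h).1)]
  simp [phi0, mul_comm]

lemma phi0_aeval {N : ℕ} (A : Fin N → MvPolynomial (Fin 2) ℚ) (a : Fin N → ℚ)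
    (ha : ∀ j, phi0 (A j) = Polynomial.C (a j)) (P : MvPolynomial (Fin N) ℚ) :
    phi0 (aeval A P) = Polynomial.C (eval a P) := by
  rw [comp_aeval_apply]
  have hfun : (fun j => phi0 (A j)) = fun j => Polynomial.CAlgHom (R := ℚ) (a j) :=
    funext ha
  rw [hfun, ← comp_aeval_apply (f := a) (Polynomial.CAlgHom (R := ℚ)) P]
  have : Polynomial.CAlgHom (R := ℚ) (aeval a P) = Polynomial.C (aeval a P) := rfl
  rw [this]
  congr 1


lemma Dlin_mem_span {N : ℕ} (A : Fin N → MvPolynomial (Fin 2) ℚ) (a : Fin N → ℚ)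
    (ha : ∀ j, phi0 (A j) = Polynomial.C (a j)) (P : MvPolynomial (Fin N) ℚ) :
    Dlin (aeval A P) ∈ Submodule.span ℚ (Set.range fun j => Dlin (A j)) := by
  induction P using MvPolynomial.induction_on with
  | C r =>
      have : aeval A (C r) = (C r : MvPolynomial (Fin 2) ℚ) := by simp [algebraMap_eq]
      rw [this, Dlin_apply, pderiv_C, map_zero]
      exact Submodule.zero_mem _
  | add p q hp hq =>
      rw [map_add, map_add]; exact Submodule.add_mem _ hp hq
  | mul_X p j hp =>
      rw [map_mul, aeval_X, Dlin_mul, ha j, phi0_aeval A a ha p,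
        ← Polynomial.smul_eq_C_mul, ← Polynomial.smul_eq_C_mul]
      exact Submodule.add_mem _
        (Submodule.smul_mem _ _ (Submodule.subset_span ⟨j, rfl⟩))
        (Submodule.smul_mem _ _ hp)

lemma lin_indep (n : ℕ) :
    LinearIndependent ℚ (fun l : Fin (2 ^ n) => Dlin (c n (l : ℕ))) := by
  classical
  set m := 2 ^ n with hm
  let v : Fin m → ℚ := fun l => ((l : ℕ) : ℚ)
  have hvinj : Function.Injective v := by
    intro x y h
    exact Fin.ext (Nat.cast_injective h)
  have hV : LinearIndependent ℚ (fun l : Fin m => Matrix.vandermonde v l) :=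
    Matrix.linearIndependent_rows_iff_isUnit.2
      ((Matrix.isUnit_iff_isUnit_det _).2
        (Ne.isUnit (Matrix.det_vandermonde_ne_zero_iff.mpr hvinj)))
  have hM : LinearIndependent ℚ (fun l : Fin m =>
      (fun p : Fin m => v l ^ (m - 1 - (p : ℕ)))) := by
    have := hV.map' (LinearEquiv.funCongrLeft ℚ ℚ (Fin.revPerm (n := m))).toLinearMap
      (LinearEquiv.funCongrLeft ℚ ℚ (Fin.revPerm (n := m))).ker
    convert this using 1
    funext l
    funext p
    simp only [LinearEquiv.coe_toLinearMap, Function.comp_apply, LinearEquiv.funCongrLeft_apply,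
      LinearMap.funLeft_apply, Matrix.vandermonde, Matrix.of_apply]
    have : ((Fin.revPerm p : Fin m) : ℕ) = m - 1 - (p : ℕ) := by
      simp [Fin.revPerm, Fin.rev]
      omega
    rw [this]
    all_goals rfl
  let κ : Polynomial ℚ →ₗ[ℚ] (Fin m → ℚ) :=
    LinearMap.pi fun p => Polynomial.lcoeff ℚ (p : ℕ)
  apply LinearIndependent.of_comp κ
  have key : (⇑κ ∘ fun l : Fin m => Dlin (c n (l : ℕ)))
      = fun l : Fin m => (fun p : Fin m => v l ^ (m - 1 - (p : ℕ))) := by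
    funext l p
    simp only [Function.comp_apply, κ, LinearMap.pi_apply, Polynomial.lcoeff_apply, Dlin_c, ← hm]
    rw [Polynomial.finset_sum_coeff, Finset.sum_eq_single (p : ℕ)]
    · rw [Polynomial.coeff_C_mul, Polynomial.coeff_X_pow, if_pos rfl, mul_one]
    · intro b _ hb
      rw [Polynomial.coeff_C_mul, Polynomial.coeff_X_pow, if_neg (Ne.symm hb), mul_zero]
    · intro h; exact absurd (Finset.mem_range.mpr p.isLt) h
  rw [key]
  exact hM


/-- If `A₁,…,A_N ∈ ℚ[S,T]` specialize at `S := 0` to constant polynomials and there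
exist `Q₀,…,Q_{2^n-1} ∈ ℚ[Z₁,…,Z_N]` with `Q_l(A₁,…,A_N) = c_l` for all
`0 ≤ l < 2^n`, then `N ≥ 2^n`. -/
theorem stmt9 (n : ℕ) (hn : 1 ≤ n) (N : ℕ)
    (A : Fin N → MvPolynomial (Fin 2) ℚ)
    (hA : ∀ j, ∃ a : ℚ,
      aeval ![(0 : Polynomial ℚ), Polynomial.X] (A j) = Polynomial.C a)
    (Q : Fin (2 ^ n) → MvPolynomial (Fin N) ℚ)
    (hQ : ∀ l : Fin (2 ^ n), aeval A (Q l) = c n (l : ℕ)) :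
    2 ^ n ≤ N := by
  classical
  choose a ha using hA
  set W := Submodule.span ℚ (Set.range fun j => Dlin (A j)) with hW
  have ha' : ∀ j, phi0 (A j) = Polynomial.C (a j) := fun j => ha j
  have hvW : ∀ l : Fin (2 ^ n), Dlin (c n (l : ℕ)) ∈ W := by
    intro l
    rw [← hQ l]
    exact Dlin_mem_span A a ha' (Q l)
  have hli : LinearIndependent ℚ
      (fun l : Fin (2 ^ n) => (⟨Dlin (c n (l : ℕ)), hvW l⟩ : W)) := by
    apply LinearIndependent.of_comp W.subtype
    exact lin_indep n
  haveI : Module.Finite ℚ W := FiniteDimensional.span_of_finite ℚ (Set.finite_range _)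
  have h1 : 2 ^ n ≤ Module.finrank ℚ W := by
    simpa using hli.fintype_card_le_finrank
  have h2 : Module.finrank ℚ W ≤ N := by
    have := finrank_range_le_card (R := ℚ) (b := fun j => Dlin (A j))
    simpa [Set.finrank, hW] using this
  omega
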